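/- Let N ≥ 1, α > 0, and let P be an N×N real row-stochastic matrix with P_{ij} ≥ α for all i, j (so P is constant in time). Then for every x₀ ∈ ℝ^N, the solution x(t) = exp(−t(I − P)) x₀ of the consensus flow ẋ = −(I − P)x satisfies diam(x(t)) ≤ e^{−2αt} · diam(x₀) for all t ≥ 0, where diam(x) := max_i x_i − min_i x_i. -/

import Mathlib

open Matrix BigOperators

/-- The diameter of a vector: `diam x = max_i x_i − min_i x_i`. -/
noncomputable def vecDiam {N : ℕ} (x : Fin N → ℝ) : ℝ := (⨆ i, x i) - (⨅ i, x i)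

open Nat Filter

section AuxLemmas
variable {N : ℕ} {α : ℝ} {P : Matrix (Fin N) (Fin N) ℝ}

lemma my_le_csup (x : Fin N → ℝ) (j : Fin N) : x j ≤ ⨆ i, x i :=
  le_ciSup (Set.Finite.bddAbove (Set.finite_range x)) j

lemma my_cinf_le (x : Fin N → ℝ) (j : Fin N) : ⨅ i, x i ≤ x j :=
  ciInf_le (Set.Finite.bddBelow (Set.finite_range x)) j

lemma vecDiam_nonneg [Nonempty (Fin N)] (x : Fin N → ℝ) : 0 ≤ vecDiam x := by
  obtain ⟨j⟩ := (inferInstance : Nonempty (Fin N))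
  have h1 := my_le_csup x j
  have h2 := my_cinf_le x j
  unfold vecDiam; linarith

lemma diam_contract [Nonempty (Fin N)] (β : ℝ) (hβ : 0 ≤ β)
    (M : Matrix (Fin N) (Fin N) ℝ)
    (hrowM : ∀ i, ∑ j, M i j = 1) (hposM : ∀ i j, β ≤ M i j)
    (x : Fin N → ℝ) :
    vecDiam (M.mulVec x) ≤ (1 - 2*β) * vecDiam x := by
  obtain ⟨i₀, hi₀⟩ := Finite.exists_min x
  obtain ⟨i₁, hi₁⟩ := Finite.exists_max x
  set S := ⨆ i, x i with hS
  set I := ⨅ i, x i with hI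
  have hxI : x i₀ = I := le_antisymm (le_ciInf hi₀) (my_cinf_le x i₀)
  have hxS : x i₁ = S := le_antisymm (my_le_csup x i₁) (ciSup_le hi₁)
  have hd : 0 ≤ S - I := by
    have h1 := my_le_csup x i₀
    have h2 := my_cinf_le x i₀
    linarith
  have hnn : ∀ i j, (0:ℝ) ≤ M i j := fun i j => le_trans hβ (hposM i j)
  have hub : ∀ i, M.mulVec x i ≤ S - β * (S - I) := by
    intro i
    have hsum : M.mulVec x i = M i i₀ * x i₀ + ∑ j ∈ Finset.univ.erase i₀, M i j * x j := by
      simp only [Matrix.mulVec, dotProduct]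
      rw [← Finset.add_sum_erase _ _ (Finset.mem_univ i₀)]
    have h1 : ∑ j ∈ Finset.univ.erase i₀, M i j * x j
        ≤ (∑ j ∈ Finset.univ.erase i₀, M i j) * S := by
      rw [Finset.sum_mul]
      exact Finset.sum_le_sum fun j _ => mul_le_mul_of_nonneg_left (my_le_csup x j) (hnn i j)
    have h2 : ∑ j ∈ Finset.univ.erase i₀, M i j = 1 - M i i₀ := by
      have h3 := hrowM i
      rw [← Finset.add_sum_erase _ _ (Finset.mem_univ i₀)] at h3
      linarith
    rw [h2] at h1
    rw [hsum, hxI]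
    nlinarith [hposM i i₀]
  have hlb : ∀ i, I + β * (S - I) ≤ M.mulVec x i := by
    intro i
    have hsum : M.mulVec x i = M i i₁ * x i₁ + ∑ j ∈ Finset.univ.erase i₁, M i j * x j := by
      simp only [Matrix.mulVec, dotProduct]
      rw [← Finset.add_sum_erase _ _ (Finset.mem_univ i₁)]
    have h1 : (∑ j ∈ Finset.univ.erase i₁, M i j) * I
        ≤ ∑ j ∈ Finset.univ.erase i₁, M i j * x j := by
      rw [Finset.sum_mul]
      exact Finset.sum_le_sum fun j _ => mul_le_mul_of_nonneg_left (my_cinf_le x j) (hnn i j)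
    have h2 : ∑ j ∈ Finset.univ.erase i₁, M i j = 1 - M i i₁ := by
      have h3 := hrowM i
      rw [← Finset.add_sum_erase _ _ (Finset.mem_univ i₁)] at h3
      linarith
    rw [h2] at h1
    rw [hsum, hxS]
    nlinarith [hposM i i₁]
  have hsup : (⨆ i, M.mulVec x i) ≤ S - β * (S - I) := ciSup_le hub
  have hinf : I + β * (S - I) ≤ ⨅ i, M.mulVec x i := le_ciInf hlb
  unfold vecDiam
  rw [← hS, ← hI]
  linarith

lemma diam_pow [Nonempty (Fin N)] (c : ℝ) (hc : 0 ≤ c) (M : Matrix (Fin N) (Fin N) ℝ)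
    (h : ∀ y, vecDiam (M.mulVec y) ≤ c * vecDiam y) (x : Fin N → ℝ) :
    ∀ n : ℕ, vecDiam ((M^n).mulVec x) ≤ c^n * vecDiam x := by
  intro n
  induction n with
  | zero => simp [Matrix.one_mulVec]
  | succ n ih =>
    rw [_root_.pow_succ', ← Matrix.mulVec_mulVec]
    calc vecDiam (M.mulVec ((M^n).mulVec x)) ≤ c * vecDiam ((M^n).mulVec x) := h _
      _ ≤ c * (c^n * vecDiam x) := mul_le_mul_of_nonneg_left ih hc
      _ = c^(n+1) * vecDiam x := by ring

lemma pow_rowsum (hrow : ∀ i, ∑ j, P i j = 1) :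
    ∀ (k : ℕ) (i : Fin N), ∑ j, (P ^ k) i j = 1 := by
  intro k
  induction k with
  | zero => intro i; simp [Matrix.one_apply]
  | succ k ih =>
    intro i
    simp only [pow_succ, Matrix.mul_apply]
    rw [Finset.sum_comm]
    calc ∑ l, ∑ j, (P ^ k) i l * P l j
        = ∑ l, (P ^ k) i l * ∑ j, P l j := by
          simp [Finset.mul_sum]
      _ = 1 := by simp [hrow, ih i]

lemma pow_nonneg' (hnn : ∀ i j, (0:ℝ) ≤ P i j) :
    ∀ (k : ℕ) (i j : Fin N), 0 ≤ (P ^ k) i j := by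
  intro k
  induction k with
  | zero => intro i j; rw [pow_zero]; by_cases h : i = j <;> simp [Matrix.one_apply, h]
  | succ k ih =>
    intro i j
    rw [pow_succ, Matrix.mul_apply]
    exact Finset.sum_nonneg fun l _ => mul_nonneg (ih i l) (hnn l j)

lemma pow_entry_ge (hrow : ∀ i, ∑ j, P i j = 1) (hnn : ∀ i j, (0:ℝ) ≤ P i j)
    (hpos : ∀ i j, α ≤ P i j) :
    ∀ (k : ℕ) (i j : Fin N), α ≤ (P ^ (k+1)) i j := by
  intro k i j
  rw [pow_succ, Matrix.mul_apply]
  calc α = (∑ l, (P ^ k) i l) * α := by rw [pow_rowsum hrow k i, one_mul]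
    _ = ∑ l, (P ^ k) i l * α := by rw [Finset.sum_mul]
    _ ≤ ∑ l, (P ^ k) i l * P l j :=
        Finset.sum_le_sum fun l _ =>
          mul_le_mul_of_nonneg_left (hpos l j) (pow_nonneg' hnn k i l)

lemma entry_le_one (hrow : ∀ i, ∑ j, P i j = 1) (hnn : ∀ i j, (0:ℝ) ≤ P i j)
    (i j : Fin N) : P i j ≤ 1 := by
  have : P i j ≤ ∑ l, P i l :=
    Finset.single_le_sum (fun l _ => hnn i l) (Finset.mem_univ j)
  rw [hrow i] at this
  exact this

lemma coord_summable (hrow : ∀ i, ∑ j, P i j = 1) (hnn : ∀ i j, (0:ℝ) ≤ P i j)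
    {h : ℝ} (hh : 0 ≤ h) (i j : Fin N) :
    Summable (fun k : ℕ => ((k ! : ℝ)⁻¹ * (h ^ k * (P ^ k) i j))) := by
  apply Summable.of_nonneg_of_le (f := fun k => h ^ k / (k ! : ℝ))
  · intro k
    have := pow_nonneg' hnn k i j
    positivity
  · intro k
    have h1 : (P ^ k) i j ≤ 1 := by
      induction k with
      | zero => by_cases hij : i = j <;> simp [Matrix.one_apply, hij]
      | succ k _ =>
        exact entry_le_one (pow_rowsum hrow (k+1)) (fun a b => pow_nonneg' hnn (k+1) a b) i j
    have h2 : (0:ℝ) ≤ h ^ k := pow_nonneg hh k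
    have h3 : (0:ℝ) ≤ ((k ! : ℝ))⁻¹ := by positivity
    calc (k ! : ℝ)⁻¹ * (h ^ k * (P ^ k) i j) ≤ (k ! : ℝ)⁻¹ * (h ^ k * 1) := by
          apply mul_le_mul_of_nonneg_left _ h3
          exact mul_le_mul_of_nonneg_left h1 h2
      _ = h ^ k / (k ! : ℝ) := by ring
  · exact Real.summable_pow_div_factorial h

lemma exp_entry (hrow : ∀ i, ∑ j, P i j = 1) (hnn : ∀ i j, (0:ℝ) ≤ P i j)
    {h : ℝ} (hh : 0 ≤ h) (i j : Fin N) :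
    (NormedSpace.exp (h • P)) i j = ∑' k : ℕ, ((k ! : ℝ)⁻¹ * (h ^ k * (P ^ k) i j)) := by
  have hcoord : ∀ (k : ℕ) (a b : Fin N),
      ((k ! : ℝ)⁻¹ • (h • P) ^ k) a b = (k ! : ℝ)⁻¹ * (h ^ k * (P ^ k) a b) := by
    intro k a b
    rw [smul_pow]
    simp [Matrix.smul_apply, smul_eq_mul]
  have hsumF : Summable (fun k : ℕ => ((k ! : ℝ)⁻¹ • (h • P) ^ k : Matrix (Fin N) (Fin N) ℝ)) := by
    apply Pi.summable.2
    intro a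
    apply Pi.summable.2
    intro b
    apply Summable.congr (coord_summable hrow hnn hh a b)
    intro k
    exact (hcoord k a b).symm
  have hexp : NormedSpace.exp (h • P)
      = ∑' k : ℕ, ((k ! : ℝ)⁻¹ • (h • P) ^ k : Matrix (Fin N) (Fin N) ℝ) :=
    congrFun (NormedSpace.exp_eq_tsum ℝ) (h • P)
  rw [hexp]; erw [tsum_apply hsumF, tsum_apply (Pi.summable.1 hsumF i)]
  exact tsum_congr fun k => hcoord k i j

lemma exp_rowsum (hrow : ∀ i, ∑ j, P i j = 1) (hnn : ∀ i j, (0:ℝ) ≤ P i j)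
    {h : ℝ} (hh : 0 ≤ h) (i : Fin N) :
    ∑ j, (NormedSpace.exp (h • P)) i j = Real.exp h := by
  rw [Finset.sum_congr rfl (fun j _ => exp_entry hrow hnn hh i j)]
  rw [← Summable.tsum_finsetSum (fun j _ => coord_summable hrow hnn hh i j)]
  have hinner : ∀ k : ℕ, (∑ j, (k ! : ℝ)⁻¹ * (h ^ k * (P ^ k) i j)) = h ^ k / (k ! : ℝ) := by
    intro k
    rw [← Finset.mul_sum, ← Finset.mul_sum, pow_rowsum hrow k i]
    ring
  rw [tsum_congr hinner]
  have hexp : Real.exp h = ∑' k : ℕ, h ^ k / (k ! : ℝ) := by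
    rw [Real.exp_eq_exp_ℝ]
    exact congrFun NormedSpace.exp_eq_tsum_div h
  rw [hexp]

lemma exp_entry_lb (hrow : ∀ i, ∑ j, P i j = 1) (hnn : ∀ i j, (0:ℝ) ≤ P i j)
    (hpos : ∀ i j, α ≤ P i j)
    {h : ℝ} (hh : 0 ≤ h) (i j : Fin N) :
    α * (Real.exp h - 1) ≤ (NormedSpace.exp (h • P)) i j := by
  rw [exp_entry hrow hnn hh i j]
  have hsum := coord_summable hrow hnn hh i j
  rw [hsum.tsum_eq_zero_add]
  have h0 : (0:ℝ) ≤ (0 ! : ℝ)⁻¹ * (h ^ 0 * (P ^ 0) i j) := by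
    have := pow_nonneg' hnn 0 i j
    positivity
  have hshift : Summable (fun k : ℕ => ((k+1)! : ℝ)⁻¹ * (h ^ (k+1) * (P ^ (k+1)) i j)) :=
    (summable_nat_add_iff 1).2 hsum
  have hgsum : Summable (fun k : ℕ => α * (h ^ (k+1) / ((k+1)! : ℝ))) :=
    ((summable_nat_add_iff 1).2 (Real.summable_pow_div_factorial h)).mul_left α
  have hle : (∑' k : ℕ, α * (h ^ (k+1) / ((k+1)! : ℝ)))
      ≤ ∑' k : ℕ, ((k+1)! : ℝ)⁻¹ * (h ^ (k+1) * (P ^ (k+1)) i j) := by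
    apply Summable.tsum_le_tsum _ hgsum hshift
    intro k
    have hα' := pow_entry_ge hrow hnn hpos k i j
    have h2 : (0:ℝ) ≤ h ^ (k+1) := pow_nonneg hh _
    have h3 : (0:ℝ) ≤ ((k+1)! : ℝ)⁻¹ := by positivity
    calc α * (h ^ (k+1) / ((k+1)! : ℝ)) = ((k+1)! : ℝ)⁻¹ * (h ^ (k+1) * α) := by ring
      _ ≤ ((k+1)! : ℝ)⁻¹ * (h ^ (k+1) * (P ^ (k+1)) i j) :=
          mul_le_mul_of_nonneg_left (mul_le_mul_of_nonneg_left hα' h2) h3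
  have hval : (∑' k : ℕ, α * (h ^ (k+1) / ((k+1)! : ℝ))) = α * (Real.exp h - 1) := by
    rw [tsum_mul_left]
    congr 1
    have hexp : Real.exp h = ∑' k : ℕ, h ^ k / (k ! : ℝ) := by
      rw [Real.exp_eq_exp_ℝ]
      exact congrFun NormedSpace.exp_eq_tsum_div h
    have hz := Summable.tsum_eq_zero_add (Real.summable_pow_div_factorial h)
    rw [hexp, hz]
    simp
  rw [hval] at hle
  linarith

lemma exp_decomp (h : ℝ) (P : Matrix (Fin N) (Fin N) ℝ) :
    NormedSpace.exp (-(h • ((1 : Matrix (Fin N) (Fin N) ℝ) - P)))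
      = Real.exp (-h) • NormedSpace.exp (h • P) := by
  have h1 : -(h • ((1 : Matrix (Fin N) (Fin N) ℝ) - P))
      = h • P + (-h) • (1 : Matrix (Fin N) (Fin N) ℝ) := by
    rw [smul_sub]
    module
  rw [h1, Matrix.exp_add_of_commute _ _ ((Commute.one_right (h • P)).smul_right (-h))]
  rw [Matrix.smul_one_eq_diagonal, Matrix.exp_diagonal]
  have h2 : NormedSpace.exp (fun _ : Fin N => -h) = fun _ : Fin N => Real.exp (-h) := by
    rw [Pi.exp_def]
    funext i
    rw [Real.exp_eq_exp_ℝ]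
  rw [h2, ← Matrix.smul_one_eq_diagonal, mul_smul_comm, mul_one]

lemma nlim (t : ℝ) (ht : 0 ≤ t) :
    Tendsto (fun n : ℕ => (n:ℝ) * (1 - Real.exp (-(t/n)))) atTop (nhds t) := by
  rcases eq_or_lt_of_le ht with h0 | hpos
  · have heq : (fun n : ℕ => (n:ℝ) * (1 - Real.exp (-(t/n)))) = fun _ => (0:ℝ) := by
      funext n; rw [← h0]; simp
    rw [heq, ← h0]
    exact tendsto_const_nhds
  · have hψ : HasDerivAt (fun u : ℝ => 1 - Real.exp (-u)) 1 0 := by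
      have h1 : HasDerivAt (fun u : ℝ => Real.exp (-u)) (-1) 0 := by
        simpa [Function.comp_def] using (Real.hasDerivAt_exp (-(0:ℝ))).comp 0 (hasDerivAt_neg (0:ℝ))
      simpa using h1.const_sub 1
    have hslope := hasDerivAt_iff_tendsto_slope.1 hψ
    have hseq : Tendsto (fun n : ℕ => t / n) atTop (nhdsWithin 0 {x | x ≠ 0}) := by
      apply tendsto_nhdsWithin_of_tendsto_nhds_of_eventually_within
      · exact tendsto_const_div_atTop_nhds_zero_nat t
      · filter_upwards [Filter.eventually_gt_atTop 0] with n hn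
        have hn0 : (0:ℝ) < n := by exact_mod_cast hn
        exact ne_of_gt (div_pos hpos hn0)
    have hcomp := hslope.comp hseq
    have hmul := hcomp.const_mul t
    rw [mul_one] at hmul
    apply Filter.Tendsto.congr' _ hmul
    filter_upwards [Filter.eventually_gt_atTop 0] with n hn
    have hn0 : (0:ℝ) < n := by exact_mod_cast hn
    have hs0 : t / n ≠ 0 := ne_of_gt (div_pos hpos hn0)
    simp only [Function.comp_apply, slope_def_field]
    field_simp [hpos.ne', Real.exp_zero]
    rw [neg_zero, Real.exp_zero]; ring

end AuxLemmas

/-- **Diameter contraction for time-invariant uniformly positive mixing.**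
If `P` is row-stochastic with `P_{ij} ≥ α > 0`, then the solution
`x(t) = exp(−t(I − P)) x₀` of `ẋ = −(I − P)x` satisfies
`diam(x(t)) ≤ e^{−2αt} diam(x₀)` for all `t ≥ 0`. -/
theorem timeInvariant_consensus_diam_contraction
    (N : ℕ) (hN : 1 ≤ N) (α : ℝ) (hα : 0 < α)
    (P : Matrix (Fin N) (Fin N) ℝ)
    (hrow : ∀ i, ∑ j, P i j = 1)
    (hpos : ∀ i j, α ≤ P i j)
    (x₀ : Fin N → ℝ) :
    ∀ t ≥ (0:ℝ),
      vecDiam ((NormedSpace.exp (-(t • ((1 : Matrix (Fin N) (Fin N) ℝ) - P)))).mulVec x₀) ≤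
        Real.exp (-2 * α * t) * vecDiam x₀ := by
  intro t ht
  rcases Nat.lt_or_ge N 2 with hN2 | hN2
  · -- N = 1 : all diameters vanish
    have hN1 : N = 1 := by omega
    subst hN1
    have hz : ∀ z : Fin 1 → ℝ, vecDiam z = 0 := by
      intro z
      unfold vecDiam
      rw [ciSup_unique, ciInf_unique]
      ring
    rw [hz, hz, mul_zero]
  · haveI : Nonempty (Fin N) := ⟨⟨0, by omega⟩⟩
    have hnn : ∀ i j, (0:ℝ) ≤ P i j := fun i j => le_of_lt (lt_of_lt_of_le hα (hpos i j))
    have hα2 : α ≤ 1/2 := by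
      have hcard := Finset.card_nsmul_le_sum Finset.univ (fun j => P ⟨0, by omega⟩ j) α
        (fun j _ => hpos _ j)
      rw [hrow] at hcard
      simp only [Finset.card_univ, Fintype.card_fin, nsmul_eq_mul] at hcard
      have h2N : (2:ℝ) ≤ N := by exact_mod_cast hN2
      nlinarith
    set D := vecDiam x₀ with hD
    have hDnn : 0 ≤ D := vecDiam_nonneg x₀
    have key : ∀ n : ℕ, 1 ≤ n →
        vecDiam ((NormedSpace.exp (-(t • ((1 : Matrix (Fin N) (Fin N) ℝ) - P)))).mulVec x₀)
          ≤ Real.exp (-2 * α * ((n:ℝ) * (1 - Real.exp (-(t/n))))) * D := by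
      intro n hn
      have hn0 : (0:ℝ) < n := by exact_mod_cast hn
      set h := t / (n:ℝ) with hh_def
      have hh : 0 ≤ h := div_nonneg ht (le_of_lt hn0)
      set β := α * (1 - Real.exp (-h)) with hβ_def
      have he1 : Real.exp (-h) ≤ 1 := by
        have := Real.exp_le_exp.2 (neg_nonpos.2 hh)
        simpa using this
      have hβ0 : 0 ≤ β := mul_nonneg (le_of_lt hα) (by linarith)
      have hβα : β ≤ α := by nlinarith [Real.exp_pos (-h)]
      set M := NormedSpace.exp (-(h • ((1 : Matrix (Fin N) (Fin N) ℝ) - P))) with hM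
      have hMd : M = Real.exp (-h) • NormedSpace.exp (h • P) := exp_decomp h P
      have hrowM : ∀ i, ∑ j, M i j = 1 := by
        intro i
        rw [hMd]
        simp only [Matrix.smul_apply, smul_eq_mul, ← Finset.mul_sum]
        rw [exp_rowsum hrow hnn hh i, ← Real.exp_add]
        simp
      have hposM : ∀ i j, β ≤ M i j := by
        intro i j
        rw [hMd]
        have hlb := exp_entry_lb hrow hnn hpos hh i j
        have h4 : Real.exp (-h) * Real.exp h = 1 := by
          rw [← Real.exp_add]; simp
        have h3 : Real.exp (-h) * (α * (Real.exp h - 1)) = β := by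
          rw [hβ_def]; linear_combination α * h4
        calc β = Real.exp (-h) * (α * (Real.exp h - 1)) := h3.symm
          _ ≤ Real.exp (-h) * ((NormedSpace.exp (h • P)) i j) :=
              mul_le_mul_of_nonneg_left hlb (le_of_lt (Real.exp_pos _))
          _ = (Real.exp (-h) • NormedSpace.exp (h • P)) i j := by
              simp [Matrix.smul_apply, smul_eq_mul]
      have hsplit : NormedSpace.exp (-(t • ((1 : Matrix (Fin N) (Fin N) ℝ) - P))) = M ^ n := by
        rw [hM, ← Matrix.exp_nsmul]
        congr 1
        rw [← Nat.cast_smul_eq_nsmul ℝ, smul_neg, smul_smul]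
        congr 2
        rw [hh_def]
        field_simp
      rw [hsplit]
      have hc0 : 0 ≤ 1 - 2*β := by linarith
      have hcontr : ∀ y, vecDiam (M.mulVec y) ≤ (1-2*β) * vecDiam y :=
        fun y => diam_contract β hβ0 M hrowM hposM y
      calc vecDiam ((M^n).mulVec x₀) ≤ (1-2*β)^n * D := diam_pow (1-2*β) hc0 M hcontr x₀ n
        _ ≤ (Real.exp (-(2*β)))^n * D := by
            apply mul_le_mul_of_nonneg_right _ hDnn
            apply pow_le_pow_left₀ hc0 _ n
            have := Real.add_one_le_exp (-(2*β))
            linarith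
        _ = Real.exp (-2 * α * ((n:ℝ) * (1 - Real.exp (-h)))) * D := by
            rw [← Real.exp_nat_mul]
            congr 1
            rw [hβ_def]; ring
    have hu : Tendsto (fun n : ℕ => (n:ℝ) * (1 - Real.exp (-(t/n)))) atTop (nhds t) :=
      nlim t ht
    have hlim : Tendsto
        (fun n : ℕ => Real.exp (-2 * α * ((n:ℝ) * (1 - Real.exp (-(t/n))))) * D) atTop
        (nhds (Real.exp (-2*α*t) * D)) :=
      ((Real.continuous_exp.tendsto _).comp (hu.const_mul (-2*α))).mul_const D
    exact ge_of_tendsto hlim (Filter.eventually_atTop.2 ⟨1, key⟩)
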